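/- The cubic polynomial p(v) = μ - v[1 + 7.5(1-v)^2] (the right-hand side of the reduced Stommel-Cessi model) has, as a function of the parameter μ, exactly three real roots if and only if μ lies strictly between μ₋ = (1/9)(11 - 3√(3/5)) and μ₊ = (1/9)(11 + 3√(3/5)), and the boundary values μ₋, μ₊ are exactly the parameter values at which p has a double root (saddle-node bifurcation values). -/

import Mathlib

open Set Real

private noncomputable def sc (μ : ℝ) : ℝ → ℝ := fun v => μ - v * (1 + 7.5 * (1 - v) ^ 2)

private lemma sc_hasDerivAt (μ x : ℝ) :
    HasDerivAt (sc μ) (-(22.5 * x ^ 2 - 30 * x + 8.5)) x := by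
  unfold sc
  have h1 : HasDerivAt (fun v : ℝ => 1 - v) (-1) x := by
    simpa using (hasDerivAt_id x).const_sub (1 : ℝ)
  have h2 := h1.pow 2
  have h3 := (h2.const_mul (7.5 : ℝ)).const_add (1 : ℝ)
  have h4 := (hasDerivAt_id' x).mul h3
  have h5 := h4.const_sub μ
  refine h5.congr_deriv ?_
  simp only [Pi.pow_apply]
  push_cast
  ring

private lemma sc_deriv (μ x : ℝ) :
    deriv (sc μ) x = -(22.5 * x ^ 2 - 30 * x + 8.5) :=
  (sc_hasDerivAt μ x).deriv

private lemma sc_cont (μ : ℝ) : Continuous (sc μ) := by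
  unfold sc; fun_prop

section main
variable (μ : ℝ)

set_option maxHeartbeats 2000000 in
private lemma main (μ : ℝ) :
    (({v : ℝ | sc μ v = 0}.ncard = 3) ↔
      ((1 / 9) * (11 - 3 * Real.sqrt (3 / 5)) < μ ∧
        μ < (1 / 9) * (11 + 3 * Real.sqrt (3 / 5)))) ∧
    ((∃ v₀ : ℝ, sc μ v₀ = 0 ∧ deriv (sc μ) v₀ = 0) ↔
      (μ = (1 / 9) * (11 - 3 * Real.sqrt (3 / 5)) ∨
        μ = (1 / 9) * (11 + 3 * Real.sqrt (3 / 5)))) := by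
  have hs2 : Real.sqrt (3 / 5) ^ 2 = 3 / 5 := Real.sq_sqrt (by norm_num)
  have hs0 : (0 : ℝ) < Real.sqrt (3 / 5) := Real.sqrt_pos.mpr (by norm_num)
  set s := Real.sqrt (3 / 5) with hsdef
  clear_value s
  have hs1 : s < 1 := by nlinarith
  -- values at critical points
  have hfa : sc μ (2/3 - s/3) = μ - (11/9 + s/3) := by
    unfold sc; linear_combination (5 * s / 18) * hs2
  have hfb : sc μ (2/3 + s/3) = μ - (11/9 - s/3) := by
    unfold sc; linear_combination (-(5 * s / 18)) * hs2
  have hquad : ∀ x : ℝ, 22.5 * x ^ 2 - 30 * x + 8.5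
      = 22.5 * (x - (2/3 - s/3)) * (x - (2/3 + s/3)) := by
    intro x; linear_combination 2.5 * hs2
  -- monotonicity
  have hanti1 : StrictAntiOn (sc μ) (Iic (2/3 - s/3)) := by
    apply strictAntiOn_of_deriv_neg (convex_Iic _) (sc_cont μ).continuousOn
    intro x hx
    rw [interior_Iic] at hx
    rw [sc_deriv, hquad]
    have h1 : x - (2/3 - s/3) < 0 := by simpa [sub_neg] using hx
    have h2 : x - (2/3 + s/3) < 0 := by linarith
    nlinarith
  have hmono : StrictMonoOn (sc μ) (Icc (2/3 - s/3) (2/3 + s/3)) := by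
    apply strictMonoOn_of_deriv_pos (convex_Icc _ _) (sc_cont μ).continuousOn
    intro x hx
    rw [interior_Icc] at hx
    rw [sc_deriv, hquad]
    have h1 : x - (2/3 - s/3) > 0 := by have := hx.1; linarith
    have h2 : x - (2/3 + s/3) < 0 := by have := hx.2; linarith
    nlinarith
  have hanti2 : StrictAntiOn (sc μ) (Ici (2/3 + s/3)) := by
    apply strictAntiOn_of_deriv_neg (convex_Ici _) (sc_cont μ).continuousOn
    intro x hx
    rw [interior_Ici] at hx
    have hx' : 2/3 + s/3 < x := hx
    rw [sc_deriv, hquad]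
    have h1 : x - (2/3 - s/3) > 0 := by linarith
    have h2 : x - (2/3 + s/3) > 0 := by linarith
    nlinarith
  constructor
  · constructor
    · -- ncard = 3 → μ between
      intro hcard
      by_contra hcon
      push_neg at hcon
      -- two cases: μ ≤ μ₋  or  μ₊ ≤ μ
      have hbound : {v : ℝ | sc μ v = 0}.ncard ≤ 2 := by
        rcases le_or_gt μ ((1/9) * (11 - 3*s)) with hle | hgt
        · -- μ ≤ μ₋ : roots ⊆ insert (2/3+s/3) (S ∩ Iic (2/3-s/3))
          have hfb0 : sc μ (2/3 + s/3) ≤ 0 := by rw [hfb]; linarith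
          have hsub : {v : ℝ | sc μ v = 0} ⊆
              insert (2/3 + s/3) ({v : ℝ | sc μ v = 0} ∩ Iic (2/3 - s/3)) := by
            intro y hy
            rcases le_or_gt y (2/3 - s/3) with h | h
            · exact Set.mem_insert_of_mem _ ⟨hy, h⟩
            rcases lt_trichotomy y (2/3 + s/3) with h' | h' | h'
            · exfalso
              have := hmono (Set.mem_Icc.mpr ⟨le_of_lt h, le_of_lt h'⟩)
                (Set.mem_Icc.mpr ⟨by linarith [hs0], le_refl _⟩) h'
              have hy0 : sc μ y = 0 := hy
              linarith
            · exact h' ▸ Set.mem_insert _ _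
            · exfalso
              have := hanti2 (Set.mem_Ici.mpr (le_refl _)) (Set.mem_Ici.mpr h'.le) h'
              have hy0 : sc μ y = 0 := hy
              linarith
          have hss : ({v : ℝ | sc μ v = 0} ∩ Iic (2/3 - s/3)).Subsingleton := by
            intro x hx y hy
            exact hanti1.injOn hx.2 hy.2 (by rw [Set.mem_setOf_eq.mp hx.1, Set.mem_setOf_eq.mp hy.1])
          have hfin : (insert (2/3 + s/3) ({v : ℝ | sc μ v = 0} ∩ Iic (2/3 - s/3))).Finite :=
            (hss.finite).insert _
          calc {v : ℝ | sc μ v = 0}.ncard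
              ≤ (insert (2/3 + s/3) ({v : ℝ | sc μ v = 0} ∩ Iic (2/3 - s/3))).ncard :=
                Set.ncard_le_ncard hsub hfin
            _ ≤ ({v : ℝ | sc μ v = 0} ∩ Iic (2/3 - s/3)).ncard + 1 := Set.ncard_insert_le _ _
            _ ≤ 1 + 1 := by
                have h1 : ({v : ℝ | sc μ v = 0} ∩ Iic (2/3 - s/3)).ncard ≤ 1 := by
                  rcases hss.eq_empty_or_singleton with h | ⟨x, h⟩ <;> simp [h]
                omega
            _ = 2 := rfl
        · -- μ₊ ≤ μ
          have hge : (1/9) * (11 + 3*s) ≤ μ := by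
            by_contra hx
            push_neg at hx
            exact absurd (hcon (by linarith)) (not_le.mpr hx)
          have hfa0 : 0 ≤ sc μ (2/3 - s/3) := by rw [hfa]; linarith
          have hsub : {v : ℝ | sc μ v = 0} ⊆
              insert (2/3 - s/3) ({v : ℝ | sc μ v = 0} ∩ Ici (2/3 + s/3)) := by
            intro y hy
            rcases lt_trichotomy y (2/3 - s/3) with h | h | h
            · exfalso
              have := hanti1 (Set.mem_Iic.mpr h.le) (Set.mem_Iic.mpr (le_refl _)) h
              have hy0 : sc μ y = 0 := hy
              linarith
            · exact h ▸ Set.mem_insert _ _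
            rcases le_or_gt y (2/3 + s/3) with h' | h'
            · exfalso
              have := hmono (Set.mem_Icc.mpr ⟨le_refl _, by linarith [hs0]⟩)
                (Set.mem_Icc.mpr ⟨h.le, h'⟩) h
              have hy0 : sc μ y = 0 := hy
              linarith
            · exact Set.mem_insert_of_mem _ ⟨hy, h'.le⟩
          have hss : ({v : ℝ | sc μ v = 0} ∩ Ici (2/3 + s/3)).Subsingleton := by
            intro x hx y hy
            exact hanti2.injOn hx.2 hy.2 (by rw [Set.mem_setOf_eq.mp hx.1, Set.mem_setOf_eq.mp hy.1])
          have hfin : (insert (2/3 - s/3) ({v : ℝ | sc μ v = 0} ∩ Ici (2/3 + s/3))).Finite :=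
            (hss.finite).insert _
          calc {v : ℝ | sc μ v = 0}.ncard
              ≤ (insert (2/3 - s/3) ({v : ℝ | sc μ v = 0} ∩ Ici (2/3 + s/3))).ncard :=
                Set.ncard_le_ncard hsub hfin
            _ ≤ ({v : ℝ | sc μ v = 0} ∩ Ici (2/3 + s/3)).ncard + 1 := Set.ncard_insert_le _ _
            _ ≤ 1 + 1 := by
                have h1 : ({v : ℝ | sc μ v = 0} ∩ Ici (2/3 + s/3)).ncard ≤ 1 := by
                  rcases hss.eq_empty_or_singleton with h | ⟨x, h⟩ <;> simp [h]
                omega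
            _ = 2 := rfl
      omega
    · -- μ between → ncard = 3
      rintro ⟨hL, hR⟩
      have hfaneg : sc μ (2/3 - s/3) < 0 := by rw [hfa]; linarith
      have hfbpos : 0 < sc μ (2/3 + s/3) := by rw [hfb]; linarith
      have hfm1 : 0 < sc μ (-1) := by
        have : sc μ (-1) = μ + 31 := by unfold sc; ring
        rw [this]; linarith
      have hf2 : sc μ 2 < 0 := by
        have : sc μ 2 = μ - 17 := by unfold sc; ring
        rw [this]; linarith
      -- three roots by IVT
      obtain ⟨x₁, hx₁m, hx₁⟩ : ∃ x ∈ Icc (-1 : ℝ) (2/3 - s/3), sc μ x = 0 := by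
        have h := intermediate_value_Icc' (by linarith : (-1:ℝ) ≤ 2/3 - s/3)
          (sc_cont μ).continuousOn
        have : (0:ℝ) ∈ Icc (sc μ (2/3 - s/3)) (sc μ (-1)) := ⟨hfaneg.le, hfm1.le⟩
        obtain ⟨x, hx, hfx⟩ := h this
        exact ⟨x, hx, hfx⟩
      obtain ⟨x₂, hx₂m, hx₂⟩ : ∃ x ∈ Icc (2/3 - s/3) (2/3 + s/3), sc μ x = 0 := by
        have h := intermediate_value_Icc (by linarith : (2/3 - s/3 : ℝ) ≤ 2/3 + s/3)
          (sc_cont μ).continuousOn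
        obtain ⟨x, hx, hfx⟩ := h ⟨hfaneg.le, hfbpos.le⟩
        exact ⟨x, hx, hfx⟩
      obtain ⟨x₃, hx₃m, hx₃⟩ : ∃ x ∈ Icc (2/3 + s/3 : ℝ) 2, sc μ x = 0 := by
        have h := intermediate_value_Icc' (by linarith : (2/3 + s/3 : ℝ) ≤ 2)
          (sc_cont μ).continuousOn
        obtain ⟨x, hx, hfx⟩ := h ⟨hf2.le, hfbpos.le⟩
        exact ⟨x, hx, hfx⟩
      have hx₁lt : x₁ < 2/3 - s/3 :=
        lt_of_le_of_ne hx₁m.2 (fun he => by rw [he] at hx₁; linarith)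
      have hx₂gt : 2/3 - s/3 < x₂ :=
        lt_of_le_of_ne hx₂m.1 (fun he => by rw [← he] at hx₂; linarith)
      have hx₂lt : x₂ < 2/3 + s/3 :=
        lt_of_le_of_ne hx₂m.2 (fun he => by rw [he] at hx₂; linarith)
      have hx₃gt : 2/3 + s/3 < x₃ :=
        lt_of_le_of_ne hx₃m.1 (fun he => by rw [← he] at hx₃; linarith)
      rw [Set.ncard_eq_three]
      refine ⟨x₁, x₂, x₃, by linarith, by linarith, by linarith, ?_⟩
      ext y
      simp only [Set.mem_setOf_eq, Set.mem_insert_iff, Set.mem_singleton_iff]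
      constructor
      · intro hy
        rcases le_or_gt y (2/3 - s/3) with h | h
        · exact Or.inl (hanti1.injOn (Set.mem_Iic.mpr h) (Set.mem_Iic.mpr hx₁lt.le)
            (by rw [hy, hx₁]))
        rcases le_or_gt y (2/3 + s/3) with h' | h'
        · exact Or.inr (Or.inl (hmono.injOn (Set.mem_Icc.mpr ⟨h.le, h'⟩)
            (Set.mem_Icc.mpr ⟨hx₂gt.le, hx₂lt.le⟩) (by rw [hy, hx₂])))
        · exact Or.inr (Or.inr (hanti2.injOn (Set.mem_Ici.mpr h'.le)
            (Set.mem_Ici.mpr hx₃gt.le) (by rw [hy, hx₃])))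
      · rintro (rfl | rfl | rfl) <;> assumption
  · -- part 2
    constructor
    · rintro ⟨v₀, h0, hd⟩
      rw [sc_deriv] at hd
      have h22 : 22.5 * v₀ ^ 2 - 30 * v₀ + 8.5 = 0 := by linarith
      rw [hquad] at h22
      have : (v₀ - (2/3 - s/3)) * (v₀ - (2/3 + s/3)) = 0 := by linarith [h22]
      rcases mul_eq_zero.mp this with h | h
      · -- v₀ = 2/3 - s/3, μ = μ₊
        right
        have hv : v₀ = 2/3 - s/3 := by linarith
        rw [hv] at h0
        unfold sc at h0
        linear_combination h0 - (5 * s / 18) * hs2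
      · left
        have hv : v₀ = 2/3 + s/3 := by linarith
        rw [hv] at h0
        unfold sc at h0
        linear_combination h0 + (5 * s / 18) * hs2
    · rintro (h | h)
      · refine ⟨2/3 + s/3, ?_, ?_⟩
        · unfold sc; rw [h]; linear_combination (-(5 * s / 18)) * hs2
        · rw [sc_deriv, hquad]; ring
      · refine ⟨2/3 - s/3, ?_, ?_⟩
        · unfold sc; rw [h]; linear_combination (5 * s / 18) * hs2
        · rw [sc_deriv, hquad]; ring
end main

/-- Reduced Stommel–Cessi model `v̇ = μ - v[1 + 7.5(1-v)²]`:
the right-hand side has exactly three real roots iff `μ₋ < μ < μ₊` where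
`μ₋ = (1/9)(11 - 3√(3/5))`, `μ₊ = (1/9)(11 + 3√(3/5))`, and `μ₋, μ₊` are exactly
the parameter values at which a double root (saddle-node bifurcation) occurs. -/
theorem stommel_cessi_saddle_node (μ : ℝ) :
    (({v : ℝ | μ - v * (1 + 7.5 * (1 - v) ^ 2) = 0}.ncard = 3) ↔
      ((1 / 9) * (11 - 3 * Real.sqrt (3 / 5)) < μ ∧
        μ < (1 / 9) * (11 + 3 * Real.sqrt (3 / 5)))) ∧
    ((∃ v₀ : ℝ, μ - v₀ * (1 + 7.5 * (1 - v₀) ^ 2) = 0 ∧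
        deriv (fun v : ℝ => μ - v * (1 + 7.5 * (1 - v) ^ 2)) v₀ = 0) ↔
      (μ = (1 / 9) * (11 - 3 * Real.sqrt (3 / 5)) ∨
        μ = (1 / 9) * (11 + 3 * Real.sqrt (3 / 5)))) :=
  main μ
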